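/- There exists a universal constant C such that for all 0 < t₁ < t₂ one has ∫₀^{t₁} ( ∫_ℝ |G_{t₂−s}(x) − G_{t₁−s}(x)| dx )² ds ≤ C (t₂ − t₁). -/

import Mathlib

open MeasureTheory Real Filter

/-- The heat kernel on `ℝ`: `G t x = (4πt)^(-1/2) exp(-x²/(4t))`. -/
noncomputable def G (t x : ℝ) : ℝ :=
  (4 * Real.pi * t) ^ (-(1:ℝ)/2) * Real.exp (-x ^ 2 / (4 * t))


lemma fourpit_pos {t : ℝ} (ht : 0 < t) : 0 < 4 * Real.pi * t := by positivity

lemma gauss_rw (t : ℝ) (ht : 0 < t) (x : ℝ) :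
    Real.exp (-x ^ 2 / (4 * t)) = Real.exp (-(1/(4*t)) * x ^ 2) := by
  congr 1; field_simp

lemma gauss_integrable {t : ℝ} (ht : 0 < t) :
    Integrable (fun x : ℝ => Real.exp (-x ^ 2 / (4 * t))) := by
  have h := integrable_exp_neg_mul_sq (b := 1/(4*t)) (by positivity)
  refine h.congr ?_
  filter_upwards with x
  rw [gauss_rw t ht]

lemma gauss_int {t : ℝ} (ht : 0 < t) :
    ∫ x : ℝ, Real.exp (-x ^ 2 / (4 * t)) = Real.sqrt (4 * Real.pi * t) := by
  simp_rw [gauss_rw t ht]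
  rw [integral_gaussian]
  congr 1
  field_simp

lemma G_integrable {t : ℝ} (ht : 0 < t) : Integrable (G t) := by
  exact (gauss_integrable ht).const_mul _

lemma G_nonneg {t : ℝ} (ht : 0 < t) (x : ℝ) : 0 ≤ G t x := by
  unfold G
  have h1 : (0:ℝ) < (4 * Real.pi * t) ^ (-(1:ℝ)/2) :=
    Real.rpow_pos_of_pos (fourpit_pos ht) _
  positivity

lemma rpow_mul_sqrt {c : ℝ} (hc : 0 < c) : c ^ (-(1:ℝ)/2) * Real.sqrt c = 1 := by
  rw [Real.sqrt_eq_rpow, ← Real.rpow_add hc]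
  norm_num

lemma integral_G {t : ℝ} (ht : 0 < t) : ∫ x : ℝ, G t x = 1 := by
  unfold G
  rw [integral_const_mul, gauss_int ht, rpow_mul_sqrt (fourpit_pos ht)]

lemma L1_le_two {a b : ℝ} (ha : 0 < a) (hb : 0 < b) :
    ∫ x : ℝ, |G b x - G a x| ≤ 2 := by
  have h1 : ∫ x : ℝ, |G b x - G a x| ≤ ∫ x : ℝ, (G b x + G a x) := by
    refine integral_mono (((G_integrable hb).sub (G_integrable ha)).abs)
      ((G_integrable hb).add (G_integrable ha)) ?_
    intro x
    calc |G b x - G a x| ≤ |G b x| + |G a x| := abs_sub _ _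
    _ = G b x + G a x := by rw [abs_of_nonneg (G_nonneg hb x), abs_of_nonneg (G_nonneg ha x)]
  rw [integral_add (G_integrable hb) (G_integrable ha), integral_G hb, integral_G ha] at h1
  linarith

lemma L1_le {a b : ℝ} (ha : 0 < a) (hab : a ≤ b) :
    ∫ x : ℝ, |G b x - G a x| ≤ (b - a) / a := by
  have hb : 0 < b := lt_of_lt_of_le ha hab
  set ca : ℝ := (4 * Real.pi * a) ^ (-(1:ℝ)/2) with hca
  set cb : ℝ := (4 * Real.pi * b) ^ (-(1:ℝ)/2) with hcb
  have hcapos : 0 < ca := Real.rpow_pos_of_pos (fourpit_pos ha) _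
  have hcbpos : 0 < cb := Real.rpow_pos_of_pos (fourpit_pos hb) _
  have hcab : cb ≤ ca :=
    Real.rpow_le_rpow_of_nonpos (fourpit_pos ha) (by nlinarith [Real.pi_pos]) (by norm_num)
  have hexp : ∀ x : ℝ, Real.exp (-x ^ 2 / (4 * a)) ≤ Real.exp (-x ^ 2 / (4 * b)) := by
    intro x
    apply Real.exp_le_exp.2
    rw [div_le_div_iff₀ (by positivity) (by positivity)]
    nlinarith [sq_nonneg x]
  have hint1 : Integrable (fun x : ℝ => (ca - cb) * Real.exp (-x ^ 2 / (4 * b))) :=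
    (gauss_integrable hb).const_mul _
  have hint2 : Integrable (fun x : ℝ =>
      ca * (Real.exp (-x ^ 2 / (4 * b)) - Real.exp (-x ^ 2 / (4 * a)))) :=
    ((gauss_integrable hb).sub (gauss_integrable ha)).const_mul _
  have hpt : ∀ x : ℝ, |G b x - G a x| ≤ (ca - cb) * Real.exp (-x ^ 2 / (4 * b)) +
      ca * (Real.exp (-x ^ 2 / (4 * b)) - Real.exp (-x ^ 2 / (4 * a))) := by
    intro x
    have e1 : G b x - G a x = (cb - ca) * Real.exp (-x ^ 2 / (4 * b)) +
        ca * (Real.exp (-x ^ 2 / (4 * b)) - Real.exp (-x ^ 2 / (4 * a))) := by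
      unfold G; rw [← hca, ← hcb]; ring
    rw [e1]
    have h2 : |(cb - ca) * Real.exp (-x ^ 2 / (4 * b))| =
        (ca - cb) * Real.exp (-x ^ 2 / (4 * b)) := by
      rw [abs_mul, abs_of_nonneg (Real.exp_pos _).le, abs_sub_comm,
        abs_of_nonneg (by linarith)]
    calc |(cb - ca) * Real.exp (-x ^ 2 / (4 * b)) +
        ca * (Real.exp (-x ^ 2 / (4 * b)) - Real.exp (-x ^ 2 / (4 * a)))|
        ≤ |(cb - ca) * Real.exp (-x ^ 2 / (4 * b))| +
          |ca * (Real.exp (-x ^ 2 / (4 * b)) - Real.exp (-x ^ 2 / (4 * a)))| := abs_add_le _ _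
      _ = (ca - cb) * Real.exp (-x ^ 2 / (4 * b)) +
          ca * (Real.exp (-x ^ 2 / (4 * b)) - Real.exp (-x ^ 2 / (4 * a))) := by
          rw [h2, abs_mul, abs_of_nonneg hcapos.le, abs_of_nonneg (by linarith [hexp x])]
  have h3 : ∫ x : ℝ, |G b x - G a x| ≤
      ∫ x : ℝ, ((ca - cb) * Real.exp (-x ^ 2 / (4 * b)) +
        ca * (Real.exp (-x ^ 2 / (4 * b)) - Real.exp (-x ^ 2 / (4 * a)))) :=
    integral_mono (((G_integrable hb).sub (G_integrable ha)).abs) (hint1.add hint2) hpt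
  have h4 : ∫ x : ℝ, ((ca - cb) * Real.exp (-x ^ 2 / (4 * b)) +
        ca * (Real.exp (-x ^ 2 / (4 * b)) - Real.exp (-x ^ 2 / (4 * a)))) =
      (ca - cb) * Real.sqrt (4 * Real.pi * b) +
      ca * (Real.sqrt (4 * Real.pi * b) - Real.sqrt (4 * Real.pi * a)) := by
    rw [integral_add hint1 hint2, integral_const_mul, integral_const_mul,
      integral_sub (gauss_integrable hb) (gauss_integrable ha), gauss_int hb, gauss_int ha]
  rw [h4] at h3
  have hca1 : ca * Real.sqrt (4 * Real.pi * a) = 1 := rpow_mul_sqrt (fourpit_pos ha)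
  have hcb1 : cb * Real.sqrt (4 * Real.pi * b) = 1 := rpow_mul_sqrt (fourpit_pos hb)
  set p := Real.sqrt (4 * Real.pi * a) with hp
  set q := Real.sqrt (4 * Real.pi * b) with hq
  have hppos : 0 < p := Real.sqrt_pos.2 (fourpit_pos ha)
  have hqpos : 0 < q := Real.sqrt_pos.2 (fourpit_pos hb)
  have hpsq : p ^ 2 = 4 * Real.pi * a := Real.sq_sqrt (fourpit_pos ha).le
  have hqsq : q ^ 2 = 4 * Real.pi * b := Real.sq_sqrt (fourpit_pos hb).le
  have hpq : p ≤ q := by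
    rw [hp, hq]
    exact Real.sqrt_le_sqrt (by nlinarith [Real.pi_pos])
  have hcaval : ca = 1 / p := by
    field_simp
    linarith [hca1]
  have hcbval : cb = 1 / q := by
    field_simp
    linarith [hcb1]
  have key : (ca - cb) * q + ca * (q - p) ≤ (b - a) / a := by
    rw [hcaval, hcbval]
    have expand : (1/p - 1/q) * q + 1/p * (q - p) = (2*q - 2*p) / p := by
      field_simp; ring
    rw [expand, div_le_div_iff₀ hppos ha]
    nlinarith [sq_nonneg (q - p), Real.pi_pos, hpsq, hqsq,
      mul_nonneg hppos.le (sq_nonneg (q - p))]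
  linarith

theorem heat_kernel_time_increment_L1_squared :
    ∃ C : ℝ, 0 < C ∧ ∀ t₁ t₂ : ℝ, 0 < t₁ → t₁ < t₂ →
      ∫ s in (0:ℝ)..t₁,
          (∫ x : ℝ, |G (t₂ - s) x - G (t₁ - s) x|) ^ 2
        ≤ C * (t₂ - t₁) := by
  refine ⟨8, by norm_num, ?_⟩
  intro t₁ t₂ ht₁ ht
  set δ := t₂ - t₁ with hδ
  have hδpos : 0 < δ := by simp only [hδ]; linarith
  set f : ℝ → ℝ := fun s => (∫ x : ℝ, |G (t₂ - s) x - G (t₁ - s) x|) ^ 2 with hf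
  have hfm : StronglyMeasurable f := by
    have h1 : StronglyMeasurable (Function.uncurry
        fun s x : ℝ => |G (t₂ - s) x - G (t₁ - s) x|) := by
      apply Measurable.stronglyMeasurable
      unfold G Function.uncurry
      fun_prop
    exact (h1.integral_prod_right).pow _
  have hfnn : ∀ s, 0 ≤ f s := fun s => sq_nonneg _
  have hbound : ∀ s ∈ Set.Icc (0:ℝ) t₁, f s ≤ 4 := by
    rintro s ⟨hs0, hs1⟩
    rcases lt_or_eq_of_le hs1 with h | h
    · have ha : 0 < t₁ - s := by linarith
      have hb : 0 < t₂ - s := by linarith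
      have h2 := L1_le_two ha hb
      have hnn : 0 ≤ ∫ x : ℝ, |G (t₂ - s) x - G (t₁ - s) x| :=
        integral_nonneg fun x => abs_nonneg _
      simp only [hf]
      nlinarith
    · subst h
      have he : ∀ x : ℝ, |G (t₂ - s) x - G (s - s) x| = G (t₂ - s) x := by
        intro x
        have hz : G (s - s) x = 0 := by simp [G, Real.zero_rpow, sub_self]
        rw [hz, sub_zero, abs_of_nonneg (G_nonneg (by linarith) x)]
      simp only [hf]
      rw [integral_congr_ae (Filter.Eventually.of_forall he), integral_G (by linarith)]
      norm_num
  have hfint : IntervalIntegrable f volume 0 t₁ := by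
    rw [intervalIntegrable_iff_integrableOn_Ioc_of_le ht₁.le]
    refine Integrable.mono' (g := fun _ => (4:ℝ))
      (integrableOn_const measure_Ioc_lt_top.ne)
      hfm.aestronglyMeasurable.restrict ?_
    rw [ae_restrict_iff' measurableSet_Ioc]
    filter_upwards with s hs
    rw [Real.norm_eq_abs, abs_of_nonneg (hfnn s)]
    exact hbound s ⟨hs.1.le, hs.2⟩
  by_cases hcase : t₁ ≤ δ
  · calc ∫ s in (0:ℝ)..t₁, f s ≤ ∫ s in (0:ℝ)..t₁, (4:ℝ) :=
        intervalIntegral.integral_mono_on ht₁.le hfint intervalIntegrable_const hbound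
    _ = 4 * t₁ := by simp [mul_comm]
    _ ≤ 8 * δ := by linarith
  · push_neg at hcase
    set s₀ := t₁ - δ with hs₀
    have hs₀pos : 0 < s₀ := by simp only [hs₀]; linarith
    have hs₀lt : s₀ < t₁ := by simp only [hs₀]; linarith
    have hsub1 : Set.uIcc (0:ℝ) s₀ ⊆ Set.uIcc 0 t₁ :=
      Set.uIcc_subset_uIcc (Set.mem_uIcc.2 (Or.inl ⟨le_rfl, ht₁.le⟩))
        (Set.mem_uIcc.2 (Or.inl ⟨hs₀pos.le, hs₀lt.le⟩))
    have hsub2 : Set.uIcc s₀ t₁ ⊆ Set.uIcc 0 t₁ :=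
      Set.uIcc_subset_uIcc (Set.mem_uIcc.2 (Or.inl ⟨hs₀pos.le, hs₀lt.le⟩))
        (Set.mem_uIcc.2 (Or.inl ⟨ht₁.le, le_rfl⟩))
    have hint1 : IntervalIntegrable f volume 0 s₀ := hfint.mono_set hsub1
    have hint2 : IntervalIntegrable f volume s₀ t₁ := hfint.mono_set hsub2
    have hsplit : ∫ s in (0:ℝ)..t₁, f s =
        (∫ s in (0:ℝ)..s₀, f s) + ∫ s in s₀..t₁, f s :=
      (intervalIntegral.integral_add_adjacent_intervals hint1 hint2).symm
    -- second piece
    have hsecond : ∫ s in s₀..t₁, f s ≤ 4 * δ := by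
      calc ∫ s in s₀..t₁, f s ≤ ∫ s in s₀..t₁, (4:ℝ) :=
          intervalIntegral.integral_mono_on hs₀lt.le hint2 intervalIntegrable_const
            (fun s hs => hbound s ⟨le_trans hs₀pos.le hs.1, hs.2⟩)
      _ = 4 * δ := by
          rw [intervalIntegral.integral_const, smul_eq_mul]
          simp only [hs₀]
          ring
    -- first piece
    have hgcont : ContinuousOn (fun s : ℝ => δ^2 / (t₁ - s)^2) (Set.uIcc 0 s₀) := by
      apply ContinuousOn.div continuousOn_const
      · fun_prop
      · intro s hs
        rw [Set.uIcc_of_le hs₀pos.le] at hs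
        have hss : s ≤ s₀ := hs.2
        have hpos : 0 < t₁ - s := by simp only [hs₀] at hss; linarith
        positivity
    have hgint : IntervalIntegrable (fun s : ℝ => δ^2 / (t₁ - s)^2) volume 0 s₀ :=
      hgcont.intervalIntegrable
    have hfirst_mono : ∫ s in (0:ℝ)..s₀, f s ≤ ∫ s in (0:ℝ)..s₀, δ^2 / (t₁ - s)^2 := by
      refine intervalIntegral.integral_mono_on hs₀pos.le hint1 hgint ?_
      rintro s ⟨hsl, hsr⟩
      have ha : 0 < t₁ - s := by simp only [hs₀] at hsr; linarith
      have hab : t₁ - s ≤ t₂ - s := by linarith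
      have h1 := L1_le ha hab
      have hval : (t₂ - s - (t₁ - s)) / (t₁ - s) = δ / (t₁ - s) := by
        rw [hδ]; ring_nf
      rw [hval] at h1
      have hnn : 0 ≤ ∫ x : ℝ, |G (t₂ - s) x - G (t₁ - s) x| :=
        integral_nonneg fun x => abs_nonneg _
      simp only [hf]
      calc (∫ x : ℝ, |G (t₂ - s) x - G (t₁ - s) x|)^2 ≤ (δ / (t₁ - s))^2 := by
            apply pow_le_pow_left₀ hnn h1
      _ = δ^2 / (t₁ - s)^2 := by rw [div_pow]
    have hFTC : ∫ s in (0:ℝ)..s₀, δ^2 / (t₁ - s)^2 =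
        δ^2 * (t₁ - s₀)⁻¹ - δ^2 * (t₁ - 0)⁻¹ := by
      refine intervalIntegral.integral_eq_sub_of_hasDerivAt (f := fun u => δ^2 * (t₁ - u)⁻¹)
        (fun s hs => ?_) hgint
      rw [Set.uIcc_of_le hs₀pos.le] at hs
      have hne : t₁ - s ≠ 0 := by
        have : s ≤ s₀ := hs.2
        have : 0 < t₁ - s := by simp only [hs₀] at this ⊢; linarith
        linarith
      have h0 : HasDerivAt (fun u : ℝ => t₁ - u) (-1) s := (hasDerivAt_id s).const_sub t₁
      have h1 : HasDerivAt (fun u : ℝ => (t₁ - u)⁻¹) (-(-1) / (t₁ - s)^2) s := h0.inv hne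
      have h2 := h1.const_mul (δ^2)
      convert h2 using 1
      exacts [rfl, by ring]
    have hfirst : ∫ s in (0:ℝ)..s₀, f s ≤ δ := by
      rw [hFTC] at hfirst_mono
      have : t₁ - s₀ = δ := by simp only [hs₀]; ring
      rw [this, sub_zero] at hfirst_mono
      have h3 : δ^2 * δ⁻¹ = δ := by rw [sq]; field_simp
      rw [h3] at hfirst_mono
      have h4 : 0 ≤ δ^2 * t₁⁻¹ := by positivity
      linarith
    rw [hsplit]
    linarith
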